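/- An invertible element T of the Clifford algebra satisfies T C^{(1)} T^{-1} ⊆ C^{(1)} if and only if T ∈ Z^× (C^{×(0)} ∪ C^{×(1)}), i.e. T is (an invertible central element times) an even or odd invertible element. -/

import Mathlib

open CliffordAlgebra

noncomputable section

variable {n : ℕ} (Q : QuadraticForm ℝ (Fin n → ℝ))

/-- The standard generators `e_a` of the Clifford algebra. -/
def egen (a : Fin n) : CliffordAlgebra Q := ι Q (Pi.single a 1)

/-- The ordered product of generators indexed by a finite set. -/
def eProd (s : Finset (Fin n)) : CliffordAlgebra Q :=
  ((s.sort (· ≤ ·)).map (egen Q)).prod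

/-- The grade-`k` subspace `C^k`, spanned by the products of `k` distinct generators. -/
def gradeSubmodule (k : ℕ) : Submodule ℝ (CliffordAlgebra Q) :=
  Submodule.span ℝ {x | ∃ s : Finset (Fin n), s.card = k ∧ x = eProd Q s}

/-- The set `Z^× (C^{×(0)} ∪ C^{×(1)})` : invertible central elements times
invertible even or odd elements. -/
def Pset : Set (CliffordAlgebra Q) :=
  {T | ∃ W T₀ : CliffordAlgebra Q,
    W ∈ Subalgebra.center ℝ (CliffordAlgebra Q) ∧ IsUnit W ∧
    (T₀ ∈ evenOdd Q 0 ∨ T₀ ∈ evenOdd Q 1) ∧ IsUnit T₀ ∧ T = W * T₀}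

/-- `Q` is diagonal with entries `±1` in the standard basis (an orthonormal-type basis,
expressing nondegeneracy of `Q`). -/
def DiagQ : Prop :=
  (∀ a, Q (Pi.single a 1) = 1 ∨ Q (Pi.single a 1) = -1) ∧
  (∀ a b : Fin n, a ≠ b → QuadraticMap.polar Q (Pi.single a 1) (Pi.single b 1) = 0)

lemma egen_sq (a : Fin n) :
    egen Q a * egen Q a = algebraMap ℝ _ (Q (Pi.single a 1)) := ι_sq_scalar Q _

lemma qsq (hQ : DiagQ Q) (a : Fin n) : Q (Pi.single a 1) * Q (Pi.single a 1) = 1 := by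
  rcases hQ.1 a with h | h <;> rw [h] <;> norm_num

lemma egen_anticomm (hQ : DiagQ Q) {a b : Fin n} (hab : a ≠ b) :
    egen Q a * egen Q b = -(egen Q b * egen Q a) := by
  have := ι_mul_ι_add_swap (Q := Q) (Pi.single a 1) (Pi.single b 1)
  rw [hQ.2 a b hab] at this
  simp only [map_zero] at this
  have h0 : egen Q a * egen Q b + egen Q b * egen Q a = 0 := by
    simpa [egen] using this
  rw [eq_neg_iff_add_eq_zero]; exact h0

lemma eProd_empty : eProd Q ∅ = 1 := by simp [eProd]

lemma eProd_singleton (a : Fin n) : eProd Q {a} = egen Q a := by simp [eProd]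

lemma eProd_insert {a : Fin n} {s : Finset (Fin n)} (h1 : ∀ b ∈ s, a < b) (h2 : a ∉ s) :
    eProd Q (insert a s) = egen Q a * eProd Q s := by
  rw [eProd, Finset.sort_insert (· ≤ ·) (fun b hb => (h1 b hb).le) h2]
  simp [eProd]

lemma eProd_sorted (L : List (Fin n)) (hL : L.Pairwise (· < ·)) :
    eProd Q L.toFinset = (L.map (egen Q)).prod := by
  rw [eProd, (List.toFinset_sort (· ≤ ·) hL.nodup).mpr (hL.imp le_of_lt)]

lemma mul_lemma (hQ : DiagQ Q) : ∀ (L : List (Fin n)), L.Pairwise (· < ·) → ∀ a : Fin n,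
    egen Q a * (L.map (egen Q)).prod ∈ Submodule.span ℝ
      {x | ∃ S : Finset (Fin n), (∀ y ∈ S, a ≤ y ∨ ∃ z ∈ L, z ≤ y) ∧ x = eProd Q S} := by
  intro L
  induction L with
  | nil =>
    intro _ a
    refine Submodule.subset_span ⟨{a}, ?_, ?_⟩
    · rintro y hy
      simp only [Finset.mem_singleton] at hy
      exact Or.inl (le_of_eq hy.symm)
    · simp [eProd_singleton]
  | cons b L' ih =>
    intro hS a
    have hS' : L'.Pairwise (· < ·) := hS.of_cons
    have hbL' : ∀ z ∈ L', b < z := fun z hz => (List.pairwise_cons.mp hS).1 z hz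
    rcases lt_trichotomy a b with hab | hab | hab
    · -- a < b : direct product is an eProd
      have haL : ∀ z ∈ (b :: L'), a < z := by
        intro z hz
        rcases List.mem_cons.mp hz with rfl | hz
        · exact hab
        · exact hab.trans (hbL' z hz)
      have hnotmem : a ∉ (b :: L').toFinset := by
        intro h
        exact absurd rfl (ne_of_lt (haL a (List.mem_toFinset.mp h)))
      have key : eProd Q (insert a (b :: L').toFinset)
          = egen Q a * (((b :: L').map (egen Q)).prod) := by
        rw [eProd_insert Q (fun y hy => haL y (List.mem_toFinset.mp hy)) hnotmem,
          eProd_sorted Q _ hS]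
      refine Submodule.subset_span ⟨insert a (b :: L').toFinset, ?_, key.symm⟩
      intro y hy
      rcases Finset.mem_insert.mp hy with rfl | hy
      · exact Or.inl le_rfl
      · exact Or.inr ⟨y, List.mem_toFinset.mp hy, le_rfl⟩
    · -- a = b : square to scalar
      subst hab
      have key : egen Q a * ((a :: L').map (egen Q)).prod
          = Q (Pi.single a 1) • (L'.map (egen Q)).prod := by
        rw [List.map_cons, List.prod_cons, ← mul_assoc, egen_sq, Algebra.smul_def]
      rw [key, eProd_sorted Q L' hS' |>.symm] at *
      refine Submodule.smul_mem _ _ (Submodule.subset_span ⟨L'.toFinset, ?_, rfl⟩)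
      intro y hy
      exact Or.inr ⟨y, List.mem_cons_of_mem _ (List.mem_toFinset.mp hy), le_rfl⟩
    · -- b < a : anticommute and recurse
      have hne : a ≠ b := ne_of_gt hab
      have key : egen Q a * ((b :: L').map (egen Q)).prod
          = -(egen Q b * (egen Q a * (L'.map (egen Q)).prod)) := by
        rw [List.map_cons, List.prod_cons, ← mul_assoc, egen_anticomm Q hQ hne,
          neg_mul, mul_assoc]
      rw [key]
      refine Submodule.neg_mem _ ?_
      have hmem := ih hS' a
      -- multiply by egen b
      have hsub : Submodule.span ℝ
          {x | ∃ S : Finset (Fin n), (∀ y ∈ S, a ≤ y ∨ ∃ z ∈ L', z ≤ y) ∧ x = eProd Q S} ≤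
          Submodule.comap (LinearMap.mulLeft ℝ (egen Q b))
            (Submodule.span ℝ {x | ∃ S : Finset (Fin n),
              (∀ y ∈ S, a ≤ y ∨ ∃ z ∈ b :: L', z ≤ y) ∧ x = eProd Q S}) := by
        rw [Submodule.span_le]
        rintro x ⟨S, hScond, rfl⟩
        have hbS : ∀ y ∈ S, b < y := by
          intro y hy
          rcases hScond y hy with h | ⟨z, hz, hzy⟩
          · exact lt_of_lt_of_le hab h
          · exact lt_of_lt_of_le (hbL' z hz) hzy
        have hbnot : b ∉ S := fun h => absurd rfl (ne_of_lt (hbS b h))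
        refine Submodule.mem_comap.mpr ?_
        have : LinearMap.mulLeft ℝ (egen Q b) (eProd Q S) = eProd Q (insert b S) := by
          rw [LinearMap.mulLeft_apply, ← eProd_insert Q hbS hbnot]
        rw [this]
        refine Submodule.subset_span ⟨insert b S, ?_, rfl⟩
        intro y hy
        rcases Finset.mem_insert.mp hy with rfl | hy
        · exact Or.inr ⟨y, List.mem_cons_self (a := y) (l := L'), le_rfl⟩
        · exact Or.inr ⟨b, List.mem_cons_self (a := b) (l := L'), (hbS y hy).le⟩
      exact hsub hmem

def ESpan : Submodule ℝ (CliffordAlgebra Q) := Submodule.span ℝ (Set.range (eProd Q))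

lemma egen_mul_mem (hQ : DiagQ Q) (a : Fin n) {x : CliffordAlgebra Q} (hx : x ∈ ESpan Q) :
    egen Q a * x ∈ ESpan Q := by
  have hsub : ESpan Q ≤ Submodule.comap (LinearMap.mulLeft ℝ (egen Q a)) (ESpan Q) := by
    rw [ESpan, Submodule.span_le]
    rintro x ⟨S, rfl⟩
    refine Submodule.mem_comap.mpr ?_
    have h := mul_lemma Q hQ (S.sort (· ≤ ·)) (Finset.sortedLT_sort S).pairwise a
    have : egen Q a * eProd Q S ∈ Submodule.span ℝ
        {x | ∃ S' : Finset (Fin n),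
          (∀ y ∈ S', a ≤ y ∨ ∃ z ∈ S.sort (· ≤ ·), z ≤ y) ∧ x = eProd Q S'} := h
    refine Submodule.span_le.mpr ?_ this
    rintro y ⟨S', _, rfl⟩
    exact Submodule.subset_span ⟨S', rfl⟩
  exact hsub hx

lemma ι_eq_sum (v : Fin n → ℝ) : ι Q v = ∑ a, v a • egen Q a := by
  have hv : v = ∑ a, v a • (Pi.single a 1 : Fin n → ℝ) := by
    ext j
    simp [Finset.sum_apply, Pi.single_apply]
  calc ι Q v = ι Q (∑ a, v a • (Pi.single a 1 : Fin n → ℝ)) := by rw [← hv]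
    _ = ∑ a, v a • egen Q a := by
        rw [map_sum]
        exact Finset.sum_congr rfl fun a _ => by rw [map_smul]; rfl

lemma mul_mem_espan (hQ : DiagQ Q) (x : CliffordAlgebra Q) :
    ∀ y ∈ ESpan Q, x * y ∈ ESpan Q := by
  induction x using CliffordAlgebra.induction with
  | algebraMap r =>
    intro y hy
    rw [← Algebra.smul_def]
    exact Submodule.smul_mem _ _ hy
  | ι v =>
    intro y hy
    rw [ι_eq_sum, Finset.sum_mul]
    refine Submodule.sum_mem _ fun a _ => ?_
    rw [smul_mul_assoc]
    exact Submodule.smul_mem _ _ (egen_mul_mem Q hQ a hy)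
  | mul x₁ x₂ h₁ h₂ =>
    intro y hy
    rw [mul_assoc]
    exact h₁ _ (h₂ y hy)
  | add x₁ x₂ h₁ h₂ =>
    intro y hy
    rw [add_mul]
    exact Submodule.add_mem _ (h₁ y hy) (h₂ y hy)

lemma espan_eq_top (hQ : DiagQ Q) : ESpan Q = ⊤ := by
  refine eq_top_iff.mpr fun x _ => ?_
  have h1 : (1 : CliffordAlgebra Q) ∈ ESpan Q := by
    rw [← eProd_empty Q]
    exact Submodule.subset_span ⟨∅, rfl⟩
  simpa using mul_mem_espan Q hQ x 1 h1

-- eigenvalue lemmas for involute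
lemma involute_even {x : CliffordAlgebra Q} (hx : x ∈ evenOdd Q 0) : involute x = x := by
  induction x, hx using even_induction with
  | algebraMap r => simp
  | add x y hx hy ihx ihy => rw [map_add, ihx, ihy]
  | ι_mul_ι_mul m₁ m₂ x hx ih => simp [map_mul, ih]

lemma involute_odd {x : CliffordAlgebra Q} (hx : x ∈ evenOdd Q 1) : involute x = -x := by
  induction x, hx using odd_induction with
  | ι v => simp
  | add x y hx hy ihx ihy => rw [map_add, ihx, ihy, neg_add]
  | ι_mul_ι_mul m₁ m₂ x hx ih => simp [map_mul, ih]

abbrev dec (x : CliffordAlgebra Q) := DirectSum.decompose (evenOdd Q) x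

lemma eq_dec_sum (x : CliffordAlgebra Q) :
    x = (dec Q x 0 : CliffordAlgebra Q) + (dec Q x 1 : CliffordAlgebra Q) := by
  classical
  have h := DirectSum.sum_support_decompose (evenOdd Q) x
  have h2 : x = ∑ i : ZMod 2, ((dec Q x i : CliffordAlgebra Q)) := by
    conv_lhs => rw [← h]
    refine Finset.sum_subset (Finset.subset_univ _) ?_
    intro i _ hi
    rw [DFinsupp.notMem_support_iff.mp hi]
    rfl
  have huniv : (Finset.univ : Finset (ZMod 2)) = {0, 1} := by decide
  rw [huniv, Finset.sum_insert (by decide), Finset.sum_singleton] at h2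
  exact h2

lemma mem_even_of_involute (x : CliffordAlgebra Q) (hx : involute x = x) :
    x ∈ evenOdd Q 0 := by
  have hd := eq_dec_sum Q x
  have hi : involute x = (dec Q x 0 : CliffordAlgebra Q) - (dec Q x 1 : CliffordAlgebra Q) := by
    conv_lhs => rw [hd]
    rw [map_add, involute_even Q (SetLike.coe_mem _), involute_odd Q (SetLike.coe_mem _),
      sub_eq_add_neg]
  rw [hx] at hi
  have h4 : (dec Q x 1 : CliffordAlgebra Q) + (dec Q x 1 : CliffordAlgebra Q) = 0 := by
    have h5 : ((dec Q x 0 : CliffordAlgebra Q) + (dec Q x 1 : CliffordAlgebra Q))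
        - ((dec Q x 0 : CliffordAlgebra Q) - (dec Q x 1 : CliffordAlgebra Q)) = 0 := by
      rw [← hd, ← hi, sub_self]
    calc (dec Q x 1 : CliffordAlgebra Q) + (dec Q x 1 : CliffordAlgebra Q)
        = ((dec Q x 0 : CliffordAlgebra Q) + (dec Q x 1 : CliffordAlgebra Q))
          - ((dec Q x 0 : CliffordAlgebra Q) - (dec Q x 1 : CliffordAlgebra Q)) := by abel
      _ = 0 := h5
  have h1 : (dec Q x 1 : CliffordAlgebra Q) = 0 := by
    have heq : (dec Q x 1 : CliffordAlgebra Q)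
        = (2⁻¹:ℝ) • ((dec Q x 1 : CliffordAlgebra Q) + (dec Q x 1 : CliffordAlgebra Q)) := by
      rw [← two_smul ℝ, smul_smul]; norm_num
    rw [heq, h4, smul_zero]
  rw [hd, h1, add_zero]
  exact SetLike.coe_mem _

lemma mem_odd_of_involute (x : CliffordAlgebra Q) (hx : involute x = -x) :
    x ∈ evenOdd Q 1 := by
  have hd := eq_dec_sum Q x
  have hi : involute x = (dec Q x 0 : CliffordAlgebra Q) - (dec Q x 1 : CliffordAlgebra Q) := by
    conv_lhs => rw [hd]
    rw [map_add, involute_even Q (SetLike.coe_mem _), involute_odd Q (SetLike.coe_mem _),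
      sub_eq_add_neg]
  rw [hx] at hi
  have h4 : (dec Q x 0 : CliffordAlgebra Q) + (dec Q x 0 : CliffordAlgebra Q) = 0 := by
    have h5 : ((dec Q x 0 : CliffordAlgebra Q) + (dec Q x 1 : CliffordAlgebra Q))
        + ((dec Q x 0 : CliffordAlgebra Q) - (dec Q x 1 : CliffordAlgebra Q)) = 0 := by
      rw [← hd, ← hi, add_neg_cancel]
    calc (dec Q x 0 : CliffordAlgebra Q) + (dec Q x 0 : CliffordAlgebra Q)
        = ((dec Q x 0 : CliffordAlgebra Q) + (dec Q x 1 : CliffordAlgebra Q))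
          + ((dec Q x 0 : CliffordAlgebra Q) - (dec Q x 1 : CliffordAlgebra Q)) := by abel
      _ = 0 := h5
  have h1 : (dec Q x 0 : CliffordAlgebra Q) = 0 := by
    have heq : (dec Q x 0 : CliffordAlgebra Q)
        = (2⁻¹:ℝ) • ((dec Q x 0 : CliffordAlgebra Q) + (dec Q x 0 : CliffordAlgebra Q)) := by
      rw [← two_smul ℝ, smul_smul]; norm_num
    rw [heq, h4, smul_zero]
  rw [hd, h1, zero_add]
  exact SetLike.coe_mem _

-- the reflection maps
def rfa (a : Fin n) : CliffordAlgebra Q →ₗ[ℝ] CliffordAlgebra Q :=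
  Q (Pi.single a 1) •
    ((LinearMap.mulLeft ℝ (egen Q a)).comp
      ((LinearMap.mulRight ℝ (egen Q a)).comp (involute (Q := Q)).toLinearMap))

lemma rfa_apply (a : Fin n) (x : CliffordAlgebra Q) :
    rfa Q a x = Q (Pi.single a 1) • (egen Q a * (involute x * egen Q a)) := rfl

lemma egen_mul_prod_comm (hQ : DiagQ Q) (a : Fin n) :
    ∀ L : List (Fin n), a ∉ L →
      egen Q a * (L.map (egen Q)).prod
        = ((-1:ℝ)^L.length) • ((L.map (egen Q)).prod * egen Q a) := by
  intro L
  induction L with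
  | nil => simp
  | cons b L' ih =>
    intro ha
    have hab : a ≠ b := fun h => ha (h ▸ List.mem_cons_self (a := a) (l := L'))
    have haL' : a ∉ L' := fun h => ha (List.mem_cons_of_mem _ h)
    rw [List.map_cons, List.prod_cons, ← mul_assoc, egen_anticomm Q hQ hab, neg_mul,
      mul_assoc, ih haL', List.length_cons, pow_succ]
    rw [mul_smul_comm]
    have hc : ((-1:ℝ)^L'.length * -1) = -((-1:ℝ)^L'.length) := by ring
    rw [hc, neg_smul, mul_assoc]

lemma conj_list (hQ : DiagQ Q) (a : Fin n) :
    ∀ L : List (Fin n), L.Nodup →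
      egen Q a * ((L.map (egen Q)).prod * egen Q a)
        = ((-1:ℝ)^L.length * (if a ∈ L then (-1:ℝ) else 1) * Q (Pi.single a 1))
            • (L.map (egen Q)).prod := by
  intro L
  induction L with
  | nil =>
    intro _
    simp only [List.map_nil, List.prod_nil, one_mul, List.length_nil, pow_zero,
      List.not_mem_nil, if_false, mul_one]
    rw [egen_sq, Algebra.smul_def, mul_one]
  | cons b L' ih =>
    intro hnd
    have hbL' : b ∉ L' := (List.nodup_cons.mp hnd).1
    have hL' : L'.Nodup := (List.nodup_cons.mp hnd).2
    by_cases hab : a = b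
    · subst hab
      have haL' : a ∉ L' := hbL'
      set P := (L'.map (egen Q)).prod with hP
      have hcomm : P * egen Q a = ((-1:ℝ)^L'.length) • (egen Q a * P) := by
        have h := egen_mul_prod_comm Q hQ a L' haL'
        rw [h, smul_smul, ← pow_add]
        have h2 : ((-1:ℝ))^(L'.length + L'.length) = 1 := by
          rw [← two_mul, pow_mul]; norm_num
        rw [h2, one_smul]
      have lhs : egen Q a * ((egen Q a * P) * egen Q a)
          = (Q (Pi.single a 1) * (-1:ℝ)^L'.length) • (egen Q a * P) := by
        rw [← mul_assoc, ← mul_assoc, mul_assoc (egen Q a) (egen Q a) P, ← mul_assoc,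
          egen_sq, mul_assoc, hcomm, ← Algebra.smul_def, smul_smul]
      rw [List.map_cons, List.prod_cons, lhs, if_pos (List.mem_cons_self (a := a) (l := L')),
        List.length_cons]
      have hsc : ((-1:ℝ)^(L'.length+1) * (-1:ℝ) * Q (Pi.single a 1))
          = Q (Pi.single a 1) * (-1:ℝ)^L'.length := by ring
      rw [hsc]
    · set P := (L'.map (egen Q)).prod with hP
      have lhs : egen Q a * ((egen Q b * P) * egen Q a)
          = -(egen Q b * (egen Q a * (P * egen Q a))) := by
        rw [← mul_assoc, ← mul_assoc, egen_anticomm Q hQ hab, neg_mul, neg_mul,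
          mul_assoc, mul_assoc]
      rw [List.map_cons, List.prod_cons, lhs, ih hL', mul_smul_comm, List.length_cons,
        ← neg_smul]
      have hif : (if a ∈ b :: L' then (-1:ℝ) else 1) = (if a ∈ L' then (-1:ℝ) else 1) := by
        simp [List.mem_cons, hab]
      rw [hif]
      have hsc : -((-1:ℝ)^L'.length * (if a ∈ L' then (-1:ℝ) else 1) * Q (Pi.single a 1))
          = ((-1:ℝ)^(L'.length+1) * (if a ∈ L' then (-1:ℝ) else 1) * Q (Pi.single a 1)) := by
        by_cases h : a ∈ L' <;> simp only [h, if_true, if_false] <;> ring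
      rw [hsc]

lemma eProd_as_map (S : Finset (Fin n)) :
    eProd Q S = (((S.sort (· ≤ ·)).map (fun i => (Pi.single i 1 : Fin n → ℝ))).map (ι Q)).prod := by
  rw [eProd, List.map_map]
  rfl

lemma involute_eProd (S : Finset (Fin n)) :
    involute (eProd Q S) = ((-1:ℝ)^S.card) • eProd Q S := by
  rw [eProd_as_map, involute_prod_map_ι]
  rw [List.length_map, Finset.length_sort]

lemma rfa_eProd (hQ : DiagQ Q) (a : Fin n) (S : Finset (Fin n)) :
    rfa Q a (eProd Q S) = (if a ∈ S then (-1:ℝ) else 1) • eProd Q S := by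
  have hnd : (S.sort (· ≤ ·)).Nodup := S.sort_nodup _
  have hlen : (S.sort (· ≤ ·)).length = S.card := S.length_sort _
  have hmem : (a ∈ S.sort (· ≤ ·)) ↔ a ∈ S := Finset.mem_sort _
  have hconj := conj_list Q hQ a (S.sort (· ≤ ·)) hnd
  rw [rfa_apply, involute_eProd]
  have hP : ((S.sort (· ≤ ·)).map (egen Q)).prod = eProd Q S := rfl
  rw [hP] at hconj
  rw [smul_mul_assoc, mul_smul_comm, hconj, smul_smul, smul_smul, hlen]
  have hifm : (if a ∈ S.sort (· ≤ ·) then (-1:ℝ) else 1) = (if a ∈ S then (-1:ℝ) else 1) := by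
    simp [hmem]
  rw [hifm]
  congr 1
  have hq2 := qsq Q hQ a
  have h2 : ((-1:ℝ))^S.card * ((-1:ℝ))^S.card = 1 := by
    rw [← pow_add, ← two_mul, pow_mul]; norm_num
  by_cases h : a ∈ S <;> simp only [h, if_true, if_false] <;> nlinarith [hq2, h2]

lemma rfa_fixed (hQ : DiagQ Q) (a : Fin n) {x : CliffordAlgebra Q}
    (hc : ∀ y, x * y = y * x) (hinv : involute x = x) : rfa Q a x = x := by
  rw [rfa_apply, hinv, hc (egen Q a), ← mul_assoc, egen_sq, ← Algebra.smul_def,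
    smul_smul, qsq Q hQ a, one_smul]

-- averaging projectors
def pa (a : Fin n) : CliffordAlgebra Q →ₗ[ℝ] CliffordAlgebra Q :=
  (2⁻¹ : ℝ) • (LinearMap.id + rfa Q a)

lemma pa_apply (a : Fin n) (x : CliffordAlgebra Q) :
    pa Q a x = (2⁻¹ : ℝ) • (x + rfa Q a x) := rfl

lemma pa_fixed (hQ : DiagQ Q) (a : Fin n) {x : CliffordAlgebra Q}
    (hc : ∀ y, x * y = y * x) (hinv : involute x = x) : pa Q a x = x := by
  rw [pa_apply, rfa_fixed Q hQ a hc hinv, ← two_smul ℝ, smul_smul]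
  norm_num

lemma pa_eProd (hQ : DiagQ Q) (a : Fin n) (S : Finset (Fin n)) :
    pa Q a (eProd Q S) = if a ∈ S then 0 else eProd Q S := by
  rw [pa_apply, rfa_eProd Q hQ a S]
  by_cases h : a ∈ S <;> simp only [h, if_true, if_false]
  · rw [neg_one_smul, add_neg_cancel, smul_zero]
  · rw [one_smul, ← two_smul ℝ, smul_smul]
    norm_num

def proj : CliffordAlgebra Q →ₗ[ℝ] CliffordAlgebra Q :=
  (List.finRange n).foldr (fun a f => (pa Q a).comp f) LinearMap.id

lemma foldr_fixed (hQ : DiagQ Q) {x : CliffordAlgebra Q}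
    (hc : ∀ y, x * y = y * x) (hinv : involute x = x) :
    ∀ l : List (Fin n), (l.foldr (fun a f => (pa Q a).comp f) LinearMap.id) x = x := by
  intro l
  induction l with
  | nil => rfl
  | cons a l' ih =>
    simp only [List.foldr_cons, LinearMap.comp_apply, ih]
    exact pa_fixed Q hQ a hc hinv

lemma foldr_eProd (hQ : DiagQ Q) (S : Finset (Fin n)) :
    ∀ l : List (Fin n), (l.foldr (fun a f => (pa Q a).comp f) LinearMap.id) (eProd Q S)
      = if (∃ a ∈ l, a ∈ S) then 0 else eProd Q S := by
  intro l
  induction l with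
  | nil => simp
  | cons a l' ih =>
    simp only [List.foldr_cons, LinearMap.comp_apply, ih]
    by_cases h : ∃ b ∈ l', b ∈ S
    · rw [if_pos h, map_zero, if_pos ⟨_, List.mem_cons_of_mem a h.choose_spec.1, h.choose_spec.2⟩]
    · rw [if_neg h, pa_eProd Q hQ a S]
      by_cases ha : a ∈ S
      · rw [if_pos ha, if_pos ⟨a, List.mem_cons_self (a := a) (l := l'), ha⟩]
      · rw [if_neg ha, if_neg ?_]
        rintro ⟨b, hb, hbS⟩
        rcases List.mem_cons.mp hb with rfl | hb
        · exact ha hbS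
        · exact h ⟨b, hb, hbS⟩

lemma center_even_eq_scalar (hQ : DiagQ Q) {x : CliffordAlgebra Q}
    (hc : ∀ y, x * y = y * x) (hinv : involute x = x) :
    ∃ r : ℝ, x = algebraMap ℝ _ r := by
  have hfix : proj Q x = x := foldr_fixed Q hQ hc hinv _
  have hrange : ∀ z ∈ ESpan Q, proj Q z ∈ Submodule.span ℝ {(1 : CliffordAlgebra Q)} := by
    intro z hz
    have hsub : ESpan Q ≤ Submodule.comap (proj Q) (Submodule.span ℝ {(1 : CliffordAlgebra Q)}) := by
      rw [ESpan, Submodule.span_le]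
      rintro _ ⟨S, rfl⟩
      refine Submodule.mem_comap.mpr ?_
      rw [show proj Q (eProd Q S) = _ from foldr_eProd Q hQ S (List.finRange n)]
      by_cases h : ∃ a ∈ List.finRange n, a ∈ S
      · rw [if_pos h]; exact Submodule.zero_mem _
      · rw [if_neg h]
        have hS : S = ∅ := by
          by_contra hne
          obtain ⟨a, ha⟩ := Finset.nonempty_of_ne_empty hne
          exact h ⟨a, List.mem_finRange a, ha⟩
        rw [hS, eProd_empty]
        exact Submodule.subset_span rfl
    exact hsub hz
  have hx : x ∈ Submodule.span ℝ {(1 : CliffordAlgebra Q)} := by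
    rw [← hfix]
    exact hrange x (by rw [espan_eq_top Q hQ]; trivial)
  obtain ⟨r, hr⟩ := Submodule.mem_span_singleton.mp hx
  exact ⟨r, by rw [← hr, Algebra.smul_def, mul_one]⟩

-- inverse of homogeneous unit is homogeneous
lemma inv_mem_even (u : (CliffordAlgebra Q)ˣ) (hu : (↑u : CliffordAlgebra Q) ∈ evenOdd Q 0) :
    (↑u⁻¹ : CliffordAlgebra Q) ∈ evenOdd Q 0 := by
  have hinv : involute (↑u : CliffordAlgebra Q) = ↑u := involute_even Q hu
  have h1 : involute (↑u⁻¹ : CliffordAlgebra Q) * ↑u = 1 := by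
    rw [← hinv, ← map_mul, Units.inv_mul, map_one]
  have h2 : (↑u : CliffordAlgebra Q) * ↑u⁻¹ = 1 := u.mul_inv
  have := left_inv_eq_right_inv h1 h2
  exact mem_even_of_involute Q _ this

lemma inv_mem_odd (u : (CliffordAlgebra Q)ˣ) (hu : (↑u : CliffordAlgebra Q) ∈ evenOdd Q 1) :
    (↑u⁻¹ : CliffordAlgebra Q) ∈ evenOdd Q 1 := by
  have hinv : involute (↑u : CliffordAlgebra Q) = -↑u := involute_odd Q hu
  have h1 : involute (↑u⁻¹ : CliffordAlgebra Q) * (-(↑u : CliffordAlgebra Q)) = 1 := by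
    rw [← hinv, ← map_mul, Units.inv_mul, map_one]
  have h2 : (-(↑u : CliffordAlgebra Q)) * (-(↑u⁻¹ : CliffordAlgebra Q)) = 1 := by
    rw [neg_mul_neg, u.mul_inv]
  have h3 := left_inv_eq_right_inv h1 h2
  refine mem_odd_of_involute Q _ ?_
  rw [h3]

lemma central_inv (u : (CliffordAlgebra Q)ˣ)
    (hc : ∀ y, (↑u : CliffordAlgebra Q) * y = y * ↑u) (y : CliffordAlgebra Q) :
    (↑u⁻¹ : CliffordAlgebra Q) * y = y * ↑u⁻¹ := by
  calc (↑u⁻¹ : CliffordAlgebra Q) * y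
      = ↑u⁻¹ * y * (↑u * ↑u⁻¹) := by rw [u.mul_inv, mul_one]
    _ = ↑u⁻¹ * (y * ↑u) * ↑u⁻¹ := by rw [← mul_assoc, ← mul_assoc]
    _ = ↑u⁻¹ * (↑u * y) * ↑u⁻¹ := by rw [← hc y]
    _ = y * ↑u⁻¹ := by rw [← mul_assoc, Units.inv_mul, one_mul]

lemma zmod_aux (i : ZMod 2) : i + 1 + i = 1 := by revert i; decide

lemma mpr_dir (T : (CliffordAlgebra Q)ˣ)
    (hP : ∃ W T₀ : CliffordAlgebra Q,
      (∀ y, W * y = y * W) ∧ IsUnit W ∧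
      ((T₀ ∈ evenOdd Q 0 ∨ T₀ ∈ evenOdd Q 1)) ∧ IsUnit T₀ ∧ (↑T : CliffordAlgebra Q) = W * T₀) :
    ∀ U ∈ evenOdd Q 1,
      (↑T : CliffordAlgebra Q) * U * (↑T⁻¹ : CliffordAlgebra Q) ∈ evenOdd Q 1 := by
  obtain ⟨W, T₀, hWc, hWu, hT₀m, hT₀u, hT⟩ := hP
  intro U hU
  obtain ⟨w, rfl⟩ := hWu
  obtain ⟨t, rfl⟩ := hT₀u
  have hTu : T = w * t := Units.ext hT
  have hwinv : ∀ y, (↑w⁻¹ : CliffordAlgebra Q) * y = y * ↑w⁻¹ := central_inv Q w hWc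
  have hred : (↑T : CliffordAlgebra Q) * U * ↑T⁻¹ = ↑t * U * ↑t⁻¹ := by
    rw [hTu, mul_inv_rev]
    push_cast
    calc (↑w : CliffordAlgebra Q) * ↑t * U * (↑t⁻¹ * ↑w⁻¹)
        = ↑w * (↑t * U * ↑t⁻¹ * ↑w⁻¹) := by
          noncomm_ring
      _ = ↑w * (↑w⁻¹ * (↑t * U * ↑t⁻¹)) := by rw [← hwinv]
      _ = (↑w * ↑w⁻¹) * (↑t * U * ↑t⁻¹) := by noncomm_ring
      _ = ↑t * U * ↑t⁻¹ := by rw [w.mul_inv, one_mul]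
  rw [hred]
  rcases hT₀m with h0 | h1
  · have := SetLike.mul_mem_graded (SetLike.mul_mem_graded h0 hU) (inv_mem_even Q t h0)
    have he : ((0 : ZMod 2) + 1 + 0) = 1 := zmod_aux 0
    rw [he] at this
    exact this
  · have := SetLike.mul_mem_graded (SetLike.mul_mem_graded h1 hU) (inv_mem_odd Q t h1)
    have he : ((1 : ZMod 2) + 1 + 1) = 1 := zmod_aux 1
    rw [he] at this
    exact this

lemma evenodd_disjoint {z : CliffordAlgebra Q} (h0 : z ∈ evenOdd Q 0)
    (h1 : z ∈ evenOdd Q 1) : z = 0 := by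
  have ha := involute_even Q h0
  have hb := involute_odd Q h1
  have hz : z = -z := ha.symm.trans hb
  have h2 : z + z = 0 := eq_neg_iff_add_eq_zero.mp hz
  calc z = (2⁻¹:ℝ) • (z + z) := by rw [← two_smul ℝ, smul_smul]; norm_num
    _ = 0 := by rw [h2, smul_zero]

lemma build (T : (CliffordAlgebra Q)ˣ) (W T₀ : CliffordAlgebra Q)
    (hWcen : ∀ y, W * y = y * W)
    (hmem : T₀ ∈ evenOdd Q 0 ∨ T₀ ∈ evenOdd Q 1) (hWT : W * T₀ = ↑T) :
    ∃ W' T₀' : CliffordAlgebra Q,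
      (∀ y, W' * y = y * W') ∧ IsUnit W' ∧
      (T₀' ∈ evenOdd Q 0 ∨ T₀' ∈ evenOdd Q 1) ∧ IsUnit T₀' ∧
      (↑T : CliffordAlgebra Q) = W' * T₀' := by
  set b : CliffordAlgebra Q := T₀ * ↑T⁻¹ with hb
  have hWb : W * b = 1 := by
    rw [hb, ← mul_assoc, hWT, T.mul_inv]
  have hbW : b * W = 1 := by rw [← hWcen b, hWb]
  have hWu : IsUnit W := ⟨⟨W, b, hWb, hbW⟩, rfl⟩
  have hT0 : T₀ = b * ↑T := by
    rw [hb, mul_assoc, T.inv_mul, mul_one]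
  have hT0u : IsUnit T₀ := by
    rw [hT0]
    exact IsUnit.mul ⟨⟨b, W, hbW, hWb⟩, rfl⟩ T.isUnit
  exact ⟨W, T₀, hWcen, hWu, hmem, hT0u, hWT.symm⟩

lemma mp_dir (hQ : DiagQ Q) (hn : 2 ≤ n) (T : (CliffordAlgebra Q)ˣ)
    (h : ∀ U ∈ evenOdd Q 1,
      (↑T : CliffordAlgebra Q) * U * (↑T⁻¹ : CliffordAlgebra Q) ∈ evenOdd Q 1) :
    ∃ W T₀ : CliffordAlgebra Q,
      (∀ y, W * y = y * W) ∧ IsUnit W ∧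
      (T₀ ∈ evenOdd Q 0 ∨ T₀ ∈ evenOdd Q 1) ∧ IsUnit T₀ ∧
      (↑T : CliffordAlgebra Q) = W * T₀ := by
  have hn0 : 0 < n := by omega
  set a0 : Fin n := ⟨0, hn0⟩ with ha0
  -- Step 1 : conjugation preserves the even part
  have hev : ∀ x ∈ evenOdd Q 0,
      (↑T : CliffordAlgebra Q) * x * (↑T⁻¹ : CliffordAlgebra Q) ∈ evenOdd Q 0 := by
    intro x hx
    have hymem : Q (Pi.single a0 1) • (egen Q a0 * x) ∈ evenOdd Q 1 := by
      refine Submodule.smul_mem _ _ ?_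
      have h1 := SetLike.mul_mem_graded (ι_mem_evenOdd_one Q (Pi.single a0 1)) hx
      rwa [add_zero] at h1
    have hxe : egen Q a0 * (Q (Pi.single a0 1) • (egen Q a0 * x)) = x := by
      rw [mul_smul_comm, ← mul_assoc, egen_sq, ← Algebra.smul_def, smul_smul,
        qsq Q hQ a0, one_smul]
    have hsplit : (↑T : CliffordAlgebra Q) * x * ↑T⁻¹
        = ((↑T : CliffordAlgebra Q) * egen Q a0 * ↑T⁻¹) *
          ((↑T : CliffordAlgebra Q) * (Q (Pi.single a0 1) • (egen Q a0 * x)) * ↑T⁻¹) := by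
      conv_lhs => rw [← hxe]
      calc (↑T : CliffordAlgebra Q) * (egen Q a0 * (Q (Pi.single a0 1) • (egen Q a0 * x))) * ↑T⁻¹
          = (↑T : CliffordAlgebra Q) * egen Q a0 * (((↑T⁻¹ : CliffordAlgebra Q) * ↑T) *
              ((Q (Pi.single a0 1) • (egen Q a0 * x)) * (↑T⁻¹ : CliffordAlgebra Q))) := by
            rw [T.inv_mul, one_mul]
            noncomm_ring
        _ = ((↑T : CliffordAlgebra Q) * egen Q a0 * ↑T⁻¹) *
            ((↑T : CliffordAlgebra Q) * (Q (Pi.single a0 1) • (egen Q a0 * x)) * ↑T⁻¹) := by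
            noncomm_ring
    rw [hsplit]
    have hm := SetLike.mul_mem_graded
      (h _ (ι_mem_evenOdd_one Q (Pi.single a0 1))) (h _ hymem)
    have he : ((1 : ZMod 2) + 1) = 0 := by decide
    rwa [he] at hm
  -- Step 2 : conjugation commutes with involute
  have hcomm : ∀ x : CliffordAlgebra Q,
      involute ((↑T : CliffordAlgebra Q) * x * (↑T⁻¹ : CliffordAlgebra Q))
        = (↑T : CliffordAlgebra Q) * involute x * (↑T⁻¹ : CliffordAlgebra Q) := by
    intro x
    have hd := eq_dec_sum Q x
    have h0 : (dec Q x 0 : CliffordAlgebra Q) ∈ evenOdd Q 0 := SetLike.coe_mem _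
    have h1 : (dec Q x 1 : CliffordAlgebra Q) ∈ evenOdd Q 1 := SetLike.coe_mem _
    conv_lhs => rw [hd]
    conv_rhs => rw [hd]
    rw [mul_add, add_mul, map_add, map_add,
      involute_even Q h0, involute_odd Q h1,
      involute_even Q (hev _ h0), involute_odd Q (h _ h1),
      mul_add, add_mul]
    rw [mul_neg, neg_mul]
  -- Step 3 : the twisting unit
  set Ti : (CliffordAlgebra Q)ˣ :=
    Units.map (involute (Q := Q)).toRingHom.toMonoidHom T with hTidef
  have hTi : (↑Ti : CliffordAlgebra Q) = involute (↑T : CliffordAlgebra Q) := rfl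
  have hTiinv : (↑Ti⁻¹ : CliffordAlgebra Q) = involute (↑T⁻¹ : CliffordAlgebra Q) := by
    rw [hTidef, ← map_inv (Units.map (involute (Q := Q)).toRingHom.toMonoidHom) T]
    rfl
  have hc' : ∀ y : CliffordAlgebra Q,
      (↑Ti : CliffordAlgebra Q) * y * (↑Ti⁻¹ : CliffordAlgebra Q)
        = (↑T : CliffordAlgebra Q) * y * (↑T⁻¹ : CliffordAlgebra Q) := by
    intro y
    have hy := hcomm (involute y)
    rw [involute_involute, map_mul, map_mul, involute_involute] at hy
    rw [hTi, hTiinv]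
    exact hy
  set cu : (CliffordAlgebra Q)ˣ := T⁻¹ * Ti with hcudef
  have hcuval : (↑cu : CliffordAlgebra Q) = (↑T⁻¹ : CliffordAlgebra Q) * ↑Ti := rfl
  have hcencu : ∀ y : CliffordAlgebra Q,
      (↑cu : CliffordAlgebra Q) * y = y * (↑cu : CliffordAlgebra Q) := by
    intro y
    rw [hcuval]
    calc (↑T⁻¹ : CliffordAlgebra Q) * ↑Ti * y
        = (↑T⁻¹ : CliffordAlgebra Q) * ((↑Ti : CliffordAlgebra Q) * y * ↑Ti⁻¹) * ↑Ti := by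
          rw [mul_assoc ((↑T⁻¹ : CliffordAlgebra Q))
              ((↑Ti : CliffordAlgebra Q) * y * (↑Ti⁻¹ : CliffordAlgebra Q))
              (↑Ti : CliffordAlgebra Q),
            mul_assoc ((↑Ti : CliffordAlgebra Q) * y), Units.inv_mul, mul_one, mul_assoc]
      _ = (↑T⁻¹ : CliffordAlgebra Q) * ((↑T : CliffordAlgebra Q) * y * ↑T⁻¹) * ↑Ti := by
          rw [hc' y]
      _ = y * ((↑T⁻¹ : CliffordAlgebra Q) * ↑Ti) := by
          rw [show (↑T : CliffordAlgebra Q) * y * (↑T⁻¹ : CliffordAlgebra Q)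
              = ↑T * (y * ↑T⁻¹) from mul_assoc _ _ _,
            ← mul_assoc ((↑T⁻¹ : CliffordAlgebra Q)), Units.inv_mul, one_mul, mul_assoc]
  have hceninv : ∀ y : CliffordAlgebra Q,
      (↑cu⁻¹ : CliffordAlgebra Q) * y = y * (↑cu⁻¹ : CliffordAlgebra Q) :=
    central_inv Q cu hcencu
  have hcuinv : involute (↑cu : CliffordAlgebra Q) = (↑cu⁻¹ : CliffordAlgebra Q) := by
    rw [hcuval, map_mul, ← hTiinv, hTi, involute_involute, hcudef, mul_inv_rev, inv_inv,
      Units.val_mul]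
  have hinvcu' : involute (↑cu⁻¹ : CliffordAlgebra Q) = (↑cu : CliffordAlgebra Q) := by
    have h2 := congrArg involute hcuinv
    rw [involute_involute] at h2
    exact h2.symm
  -- Step 4 : even and odd parts of the central unit
  set c0 : CliffordAlgebra Q :=
    (2⁻¹ : ℝ) • ((↑cu : CliffordAlgebra Q) + ↑cu⁻¹) with hc0def
  set c1 : CliffordAlgebra Q :=
    (2⁻¹ : ℝ) • ((↑cu : CliffordAlgebra Q) - ↑cu⁻¹) with hc1def
  have hc0cen : ∀ y, c0 * y = y * c0 := by
    intro y
    rw [hc0def, smul_mul_assoc, add_mul, hcencu y, hceninv y, ← mul_add, mul_smul_comm]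
  have hc1cen : ∀ y, c1 * y = y * c1 := by
    intro y
    rw [hc1def, smul_mul_assoc, sub_mul, hcencu y, hceninv y, ← mul_sub, mul_smul_comm]
  have hc0inv : involute c0 = c0 := by
    rw [hc0def, map_smul, map_add, hcuinv, hinvcu', add_comm]
  have hc1inv : involute c1 = -c1 := by
    rw [hc1def, map_smul, map_sub, hcuinv, hinvcu', ← neg_sub, smul_neg]
  obtain ⟨lr, hlr⟩ := center_even_eq_scalar Q hQ hc0cen hc0inv
  have hc1odd : c1 ∈ evenOdd Q 1 := mem_odd_of_involute Q _ hc1inv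
  have hcsum : (↑cu : CliffordAlgebra Q) = c0 + c1 := by
    rw [hc0def, hc1def, ← smul_add]
    have h2 : ((↑cu : CliffordAlgebra Q) + ↑cu⁻¹) + ((↑cu : CliffordAlgebra Q) - ↑cu⁻¹)
        = (2:ℝ) • (↑cu : CliffordAlgebra Q) := by
      rw [two_smul]; abel
    rw [h2, smul_smul]
    norm_num
  -- Step 5 : the graded parts of T and the master equation
  have hdT := eq_dec_sum Q (↑T : CliffordAlgebra Q)
  set T0 : CliffordAlgebra Q := (dec Q (↑T : CliffordAlgebra Q) 0 : CliffordAlgebra Q) with hT0def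
  set T1 : CliffordAlgebra Q := (dec Q (↑T : CliffordAlgebra Q) 1 : CliffordAlgebra Q) with hT1def
  have hT0m : T0 ∈ evenOdd Q 0 := SetLike.coe_mem _
  have hT1m : T1 ∈ evenOdd Q 1 := SetLike.coe_mem _
  have hinvT : involute (↑T : CliffordAlgebra Q) = T0 - T1 := by
    conv_lhs => rw [hdT]
    rw [map_add, involute_even Q hT0m, involute_odd Q hT1m, sub_eq_add_neg]
  have hTieq : involute (↑T : CliffordAlgebra Q)
      = (↑T : CliffordAlgebra Q) * (↑cu : CliffordAlgebra Q) := by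
    rw [hcuval, ← mul_assoc, T.mul_inv, one_mul, hTi]
  have hmain : T0 - T1 = (lr • T0 + T1 * c1) + (lr • T1 + T0 * c1) := by
    calc T0 - T1 = involute (↑T : CliffordAlgebra Q) := hinvT.symm
      _ = (↑T : CliffordAlgebra Q) * (↑cu : CliffordAlgebra Q) := hTieq
      _ = (T0 + T1) * (algebraMap ℝ _ lr + c1) := by rw [← hdT, hcsum, hlr]
      _ = (lr • T0 + T1 * c1) + (lr • T1 + T0 * c1) := by
          rw [mul_add, add_mul, add_mul, ← Algebra.commutes lr T0, ← Algebra.commutes lr T1,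
            ← Algebra.smul_def, ← Algebra.smul_def]
          abel
  have hB0 : lr • T0 + T1 * c1 ∈ evenOdd Q 0 := by
    refine Submodule.add_mem _ (Submodule.smul_mem _ _ hT0m) ?_
    have h2 := SetLike.mul_mem_graded hT1m hc1odd
    have he : ((1 : ZMod 2) + 1) = 0 := by decide
    rwa [he] at h2
  have hB1 : lr • T1 + T0 * c1 ∈ evenOdd Q 1 := by
    refine Submodule.add_mem _ (Submodule.smul_mem _ _ hT1m) ?_
    have h2 := SetLike.mul_mem_graded hT0m hc1odd
    have he : ((0 : ZMod 2) + 1) = 1 := by decide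
    rwa [he] at h2
  have hz : T0 - (lr • T0 + T1 * c1) = (lr • T1 + T0 * c1) + T1 := by
    calc T0 - (lr • T0 + T1 * c1)
        = (T0 - T1) - (lr • T0 + T1 * c1) + T1 := by abel
      _ = ((lr • T0 + T1 * c1) + (lr • T1 + T0 * c1)) - (lr • T0 + T1 * c1) + T1 := by
          rw [hmain]
      _ = (lr • T1 + T0 * c1) + T1 := by abel
  have hz0 : T0 - (lr • T0 + T1 * c1) = 0 := by
    refine evenodd_disjoint Q (Submodule.sub_mem _ hT0m hB0) ?_
    rw [hz]
    exact Submodule.add_mem _ hB1 hT1m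
  have hE0 : T0 = lr • T0 + T1 * c1 := sub_eq_zero.mp hz0
  have hE1 : (lr • T1 + T0 * c1) + T1 = 0 := by rw [← hz, hz0]
  -- Step 6 : produce the factorization
  by_cases hlam : lr = -1
  · -- T is a central multiple of its odd part
    have hTc : T1 * c1 = (2:ℝ) • T0 := by
      have h2 := hE0
      rw [hlam, neg_one_smul] at h2
      have h6 : T1 * c1 = (-T0 + T1 * c1) + T0 := by abel
      rw [← h2] at h6
      rw [h6, two_smul]
    refine build Q T ((1 : CliffordAlgebra Q) + (2⁻¹:ℝ) • c1) T1 ?_ (Or.inr hT1m) ?_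
    · intro y
      rw [add_mul, mul_add, one_mul, mul_one, smul_mul_assoc, hc1cen y, ← mul_smul_comm]
    · rw [add_mul, one_mul, smul_mul_assoc, hc1cen T1, hTc, smul_smul,
        show (2⁻¹:ℝ) * 2 = 1 by norm_num, one_smul,
        show (↑T : CliffordAlgebra Q) = T0 + T1 from hdT, add_comm]
  · have hne : (1:ℝ) + lr ≠ 0 := by
      intro hcon
      exact hlam (by linarith)
    have hTc : T0 * c1 = -(((1:ℝ)+lr) • T1) := by
      have h2 : T0 * c1 = -T1 - lr • T1 := by
        calc T0 * c1 = ((lr • T1 + T0 * c1) + T1) - T1 - lr • T1 := by abel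
          _ = -T1 - lr • T1 := by rw [hE1]; abel
      rw [h2, add_smul, one_smul]
      abel
    refine build Q T ((1 : CliffordAlgebra Q) - ((1+lr)⁻¹:ℝ) • c1) T0 ?_ (Or.inl hT0m) ?_
    · intro y
      rw [sub_mul, mul_sub, one_mul, mul_one, smul_mul_assoc, hc1cen y, ← mul_smul_comm]
    · rw [sub_mul, one_mul, smul_mul_assoc, hc1cen T0, hTc, smul_neg, smul_smul,
        inv_mul_cancel₀ hne, one_smul, sub_neg_eq_add,
        show (↑T : CliffordAlgebra Q) = T0 + T1 from hdT]

/-- `Γ^{(1)} = Z^× (C^{×(0)} ∪ C^{×(1)})`. -/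
theorem stmt4 (hQ : DiagQ Q) (hn : 2 ≤ n) (T : (CliffordAlgebra Q)ˣ) :
    (∀ U ∈ evenOdd Q 1,
        (↑T : CliffordAlgebra Q) * U * (↑T⁻¹ : CliffordAlgebra Q) ∈ evenOdd Q 1) ↔
      (↑T : CliffordAlgebra Q) ∈ Pset Q := by
  constructor
  · intro h
    obtain ⟨W, T₀, hWcen, hWu, hmem, hTu, hTeq⟩ := mp_dir Q hQ hn T h
    exact ⟨W, T₀, Subalgebra.mem_center_iff.mpr (fun b => (hWcen b).symm), hWu, hmem, hTu, hTeq⟩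
  · intro hP
    obtain ⟨W, T₀, hWc, hWu, hmem, hTu, hTeq⟩ := hP
    exact mpr_dir Q T
      ⟨W, T₀, fun y => (Subalgebra.mem_center_iff.mp hWc y).symm, hWu, hmem, hTu, hTeq⟩
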